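/- Let G₃ = ⟨g₁, g₂, g₃ ∣ g₂g₁ = g₁^{-1}g₂, g₃g₁ = g₁g₃, g₃g₂ = g₂^{-1}g₃⟩. A map ψ : G₃ → G₃ is an automorphism if and only if there exist a, b ∈ ℤ and ε₁, ε₂, ε₃ ∈ {1, -1} such that ψ(g₁) = g₁^{ε₁}, ψ(g₂) = g₁^{a} g₂^{ε₂}, and ψ(g₃) = g₂^{2b} g₃^{ε₃}. -/

import Mathlib

/-- The relators `g₂g₁g₂⁻¹g₁`, `g₃g₁g₃⁻¹g₁⁻¹`, `g₃g₂g₃⁻¹g₂` presenting the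
group `⟨g₁, g₂, g₃ ∣ g₂g₁ = g₁⁻¹g₂, g₃g₁ = g₁g₃, g₃g₂ = g₂⁻¹g₃⟩`. -/
def polyZRelsA0 : Set (FreeGroup (Fin 3)) :=
  {FreeGroup.of 1 * FreeGroup.of 0 * (FreeGroup.of 1)⁻¹ * FreeGroup.of 0,
   FreeGroup.of 2 * FreeGroup.of 0 * (FreeGroup.of 2)⁻¹ * (FreeGroup.of 0)⁻¹,
   FreeGroup.of 2 * FreeGroup.of 1 * (FreeGroup.of 2)⁻¹ * FreeGroup.of 1}

namespace PolyZAux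
def sg (n : ℤ) : ℤ := if Even n then 1 else -1
@[simp] lemma sg_zero : sg 0 = 1 := by simp [sg]
@[simp] lemma sg_one : sg 1 = -1 := by simp [sg]
@[simp] lemma sg_add (m n : ℤ) : sg (m + n) = sg m * sg n := by
  simp only [sg, Int.even_add]
  by_cases hm : Even m <;> by_cases hn : Even n <;> simp [hm, hn]
@[simp] lemma sg_neg (n : ℤ) : sg (-n) = sg n := by
  simp [sg, even_neg]
@[simp] lemma sg_neg_one : sg (-1) = -1 := by rw [sg_neg, sg_one]
lemma sg_even {n : ℤ} (h : Even n) : sg n = 1 := by simp [sg, h]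
lemma sg_odd {n : ℤ} (h : Odd n) : sg n = -1 := by
  simp [sg, Int.not_even_iff_odd.2 h]
lemma sg_eq (n : ℤ) : sg n = 1 ∨ sg n = -1 := by
  unfold sg; split <;> simp
@[simp] lemma sg_mul_self (n : ℤ) : sg n * sg n = 1 := by
  rcases sg_eq n with h | h <;> rw [h] <;> norm_num
@[simp] lemma sg_sgmul (m n : ℤ) : sg (sg m * n) = sg n := by
  rcases sg_eq m with h | h <;> rw [h] <;> simp
@[simp] lemma sg_two_mul (n : ℤ) : sg (2 * n) = 1 :=
  sg_even ⟨n, by ring⟩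
@[ext]
structure M where
  x : ℤ
  y : ℤ
  z : ℤ
namespace M
instance : Mul M := ⟨fun u v => ⟨u.x + sg u.y * v.x, u.y + sg u.z * v.y, u.z + v.z⟩⟩
instance : One M := ⟨⟨0, 0, 0⟩⟩
instance : Inv M := ⟨fun v => ⟨-(sg v.y * v.x), -(sg v.z * v.y), -v.z⟩⟩
lemma mul_def (u v : M) :
    u * v = ⟨u.x + sg u.y * v.x, u.y + sg u.z * v.y, u.z + v.z⟩ := rfl
lemma one_def : (1 : M) = ⟨0, 0, 0⟩ := rfl
lemma inv_def (v : M) : v⁻¹ = ⟨-(sg v.y * v.x), -(sg v.z * v.y), -v.z⟩ := rfl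
@[simp] lemma mul_x (u v : M) : (u * v).x = u.x + sg u.y * v.x := rfl
@[simp] lemma mul_y (u v : M) : (u * v).y = u.y + sg u.z * v.y := rfl
@[simp] lemma mul_z (u v : M) : (u * v).z = u.z + v.z := rfl
@[simp] lemma inv_x (v : M) : (v⁻¹).x = -(sg v.y * v.x) := rfl
@[simp] lemma inv_y (v : M) : (v⁻¹).y = -(sg v.z * v.y) := rfl
@[simp] lemma inv_z (v : M) : (v⁻¹).z = -v.z := rfl
@[simp] lemma one_x : (1 : M).x = 0 := rfl
@[simp] lemma one_y : (1 : M).y = 0 := rfl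
@[simp] lemma one_z : (1 : M).z = 0 := rfl
instance : Group M where
  mul_assoc u v w := by ext <;> simp [mul_def] <;> ring
  one_mul v := by ext <;> simp [mul_def, one_def]
  mul_one v := by ext <;> simp [mul_def, one_def]
  inv_mul_cancel v := by ext <;> simp [mul_def, inv_def, one_def]

-- power lemmas
lemma zpowX (p : ℤ) : ∀ n : ℤ, (⟨p, 0, 0⟩ : M) ^ n = ⟨n * p, 0, 0⟩ := by
  intro n
  induction n using Int.induction_on with
  | zero => rw [zpow_zero]; ext <;> simp [one_def]
  | succ k ih => rw [zpow_add_one, ih]; ext <;> simp [mul_def] <;> ring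
  | pred k ih => rw [zpow_sub_one, ih]; ext <;> simp [mul_def, inv_def] <;> ring

lemma zpowY (t : ℤ) : ∀ n : ℤ, (⟨0, t, 0⟩ : M) ^ n = ⟨0, n * t, 0⟩ := by
  intro n
  induction n using Int.induction_on with
  | zero => rw [zpow_zero]; ext <;> simp [one_def]
  | succ k ih => rw [zpow_add_one, ih]; ext <;> simp [mul_def] <;> ring
  | pred k ih => rw [zpow_sub_one, ih]; ext <;> simp [mul_def, inv_def] <;> ring

lemma zpowZ : ∀ n : ℤ, (⟨0, 0, 1⟩ : M) ^ n = ⟨0, 0, n⟩ := by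
  intro n
  induction n using Int.induction_on with
  | zero => rw [zpow_zero]; ext <;> simp [one_def]
  | succ k ih => rw [zpow_add_one, ih]; ext <;> simp [mul_def]
  | pred k ih => rw [zpow_sub_one, ih]; ext <;> simp [mul_def, inv_def] <;> ring

lemma zpow_z (v : M) : ∀ n : ℤ, (v ^ n).z = n * v.z := by
  intro n
  induction n using Int.induction_on with
  | zero => simp
  | succ k ih => rw [zpow_add_one]; rw [mul_z, ih]; ring
  | pred k ih => rw [zpow_sub_one]; rw [mul_z, inv_z, ih]; ring

lemma zpow_yz (v : M) (h : v.z = 0) : ∀ n : ℤ, (v ^ n).y = n * v.y ∧ (v ^ n).z = 0 := by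
  intro n
  induction n using Int.induction_on with
  | zero => simp [one_def]
  | succ k ih =>
      rw [zpow_add_one]
      rw [mul_y, mul_z, ih.1, ih.2, h]
      constructor
      · simp; ring
      · ring
  | pred k ih =>
      rw [zpow_sub_one]
      rw [mul_y, mul_z, inv_y, inv_z, ih.1, ih.2, h]
      constructor
      · simp; ring
      · ring

lemma decomp (v : M) : v = (⟨1,0,0⟩ : M) ^ v.x * (⟨0,1,0⟩ : M) ^ v.y * (⟨0,0,1⟩ : M) ^ v.z := by
  rw [zpowX, zpowY, zpowZ]
  ext <;> simp [mul_def]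

lemma forward (θ : M →* M) (hs : Function.Surjective θ) :
    ∃ a b ε₁ ε₂ ε₃ : ℤ, (ε₁ = 1 ∨ ε₁ = -1) ∧ (ε₂ = 1 ∨ ε₂ = -1) ∧ (ε₃ = 1 ∨ ε₃ = -1) ∧
      θ ⟨1,0,0⟩ = ⟨ε₁,0,0⟩ ∧ θ ⟨0,1,0⟩ = ⟨a,ε₂,0⟩ ∧ θ ⟨0,0,1⟩ = ⟨0,2*b,ε₃⟩ := by
  rcases hA : θ ⟨1,0,0⟩ with ⟨p, q, r⟩
  rcases hB : θ ⟨0,1,0⟩ with ⟨s, t, u⟩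
  rcases hC : θ ⟨0,0,1⟩ with ⟨c, d, f⟩
  -- relations in M
  have m1 : (⟨0,1,0⟩ : M) * ⟨1,0,0⟩ = (⟨1,0,0⟩ : M)⁻¹ * ⟨0,1,0⟩ := by
    ext <;> simp [mul_def, inv_def]
  have m2 : (⟨0,0,1⟩ : M) * ⟨1,0,0⟩ = (⟨1,0,0⟩ : M) * ⟨0,0,1⟩ := by
    ext <;> simp [mul_def]
  have m3 : (⟨0,0,1⟩ : M) * ⟨0,1,0⟩ = (⟨0,1,0⟩ : M)⁻¹ * ⟨0,0,1⟩ := by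
    ext <;> simp [mul_def, inv_def]
  have h1 : (⟨s,t,u⟩ : M) * ⟨p,q,r⟩ = (⟨p,q,r⟩ : M)⁻¹ * ⟨s,t,u⟩ := by
    rw [← hA, ← hB, ← map_mul, ← map_inv, ← map_mul, m1]
  have h2 : (⟨c,d,f⟩ : M) * ⟨p,q,r⟩ = (⟨p,q,r⟩ : M) * ⟨c,d,f⟩ := by
    rw [← hA, ← hC, ← map_mul, ← map_mul, m2]
  have h3 : (⟨c,d,f⟩ : M) * ⟨s,t,u⟩ = (⟨s,t,u⟩ : M)⁻¹ * ⟨c,d,f⟩ := by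
    rw [← hB, ← hC, ← map_mul, ← map_inv, ← map_mul, m3]
  rw [M.ext_iff] at h1 h2 h3
  simp [mul_def, inv_def] at h1 h2 h3
  obtain ⟨h1x, h1y, h1z⟩ := h1
  obtain ⟨h2x, h2y⟩ := h2
  obtain ⟨h3x, h3y, h3z⟩ := h3
  have hr : r = 0 := by omega
  have hu : u = 0 := by omega
  subst hr; subst hu
  simp at h1x h1y h2x h2y h3x h3y
  have hq : q = 0 := by omega
  subst hq
  simp at h1x h2x
  -- surjectivity
  -- f is a unit
  have key : ∀ v : M, θ v = ⟨p,0,0⟩ ^ v.x * ⟨s,t,0⟩ ^ v.y * ⟨c,d,f⟩ ^ v.z := by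
    intro v
    conv_lhs => rw [decomp v]
    rw [map_mul, map_mul, map_zpow, map_zpow, map_zpow, hA, hB, hC]
  obtain ⟨v, hv⟩ := hs ⟨0,0,1⟩
  rw [key] at hv
  have hvz := congrArg M.z hv
  simp [mul_def, zpow_z] at hvz
  have hf : f = 1 ∨ f = -1 := Int.isUnit_iff.mp (IsUnit.of_mul_eq_one (a := f) v.z (by linarith))
  have hfne : f ≠ 0 := by rcases hf with h | h <;> simp [h]
  obtain ⟨w, hw⟩ := hs ⟨0,1,0⟩
  rw [key] at hw
  have hwz := congrArg M.z hw
  simp [mul_def, zpow_z] at hwz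
  have hwz0 : w.z = 0 := by
    rcases hf with h | h <;> rw [h] at hwz <;> omega
  rw [hwz0, zpow_zero, mul_one] at hw
  have hwy := congrArg M.y hw
  rw [zpowX] at hwy
  simp [mul_def, (zpow_yz ⟨s,t,0⟩ rfl w.y).1] at hwy
  have ht : t = 1 ∨ t = -1 := Int.isUnit_iff.mp (IsUnit.of_mul_eq_one (a := t) w.y (by linarith))
  have htne : t ≠ 0 := by rcases ht with h | h <;> simp [h]
  obtain ⟨o, ho⟩ := hs ⟨1,0,0⟩
  rw [key] at ho
  have hoz := congrArg M.z ho
  simp [mul_def, zpow_z] at hoz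
  have hoz0 : o.z = 0 := by
    rcases hf with h | h <;> rw [h] at hoz <;> omega
  rw [hoz0, zpow_zero, mul_one] at ho
  have hoy := congrArg M.y ho
  rw [zpowX] at hoy
  simp [mul_def, (zpow_yz ⟨s,t,0⟩ rfl o.y).1] at hoy
  have hoy0 : o.y = 0 := by
    rcases ht with h | h <;> rw [h] at hoy <;> omega
  rw [hoy0, zpow_zero, mul_one, zpowX] at ho
  have hox := congrArg M.x ho
  simp at hox
  have hp : p = 1 ∨ p = -1 := Int.isUnit_iff.mp (IsUnit.of_mul_eq_one (a := p) o.x (by linarith))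
  have hpne : p ≠ 0 := by rcases hp with h | h <;> simp [h]
  -- now derive d even, c = 0
  have hsgt : sg t = -1 := by
    rcases ht with h | h <;> rw [h] <;> simp
  have hsgd : sg d = 1 := by
    -- h2x : c + sg d * p = p + c
    have : sg d * p = p := by linarith
    rcases sg_eq d with h | h
    · exact h
    · rw [h] at this; omega
  have hdeven : Even d := by
    by_contra hodd
    rw [sg_odd (Int.not_even_iff_odd.1 hodd)] at hsgd; norm_num at hsgd
  obtain ⟨b, hb⟩ := hdeven
  have hc : c = 0 := by
    -- h3x : c + sg d * s = -(sg t * s) + sg (-(sg 0 * t)) * c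
    rw [hsgd, hsgt] at h3x
    simp at h3x
    omega
  refine ⟨s, b, p, t, f, hp, ht, hf, rfl, rfl, ?_⟩
  rw [hc, hb]
  congr 1
  ring
end M

-- ## Presented group side
section P

open PresentedGroup

abbrev P := PresentedGroup polyZRelsA0

def g₁ : P := PresentedGroup.of 0
def g₂ : P := PresentedGroup.of 1
def g₃ : P := PresentedGroup.of 2

lemma mem1 : FreeGroup.of 1 * FreeGroup.of 0 * (FreeGroup.of 1)⁻¹ * FreeGroup.of 0 ∈ polyZRelsA0 :=
  Set.mem_insert _ _
lemma mem2 : FreeGroup.of 2 * FreeGroup.of 0 * (FreeGroup.of 2)⁻¹ * (FreeGroup.of 0)⁻¹ ∈ polyZRelsA0 :=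
  Set.mem_insert_of_mem _ (Set.mem_insert _ _)
lemma mem3 : FreeGroup.of 2 * FreeGroup.of 1 * (FreeGroup.of 2)⁻¹ * FreeGroup.of 1 ∈ polyZRelsA0 :=
  Set.mem_insert_of_mem _ (Set.mem_insert_of_mem _ rfl)

lemma mk_rel {r : FreeGroup (Fin 3)} (h : r ∈ polyZRelsA0) :
    PresentedGroup.mk polyZRelsA0 r = 1 :=
  (QuotientGroup.eq_one_iff _).mpr (Subgroup.subset_normalClosure h)

lemma rel1 : g₂ * g₁ * g₂⁻¹ * g₁ = 1 := by
  have := mk_rel mem1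
  rwa [map_mul, map_mul, map_inv] at this
lemma rel2 : g₃ * g₁ * g₃⁻¹ * g₁⁻¹ = 1 := by
  have := mk_rel mem2
  rwa [map_mul, map_mul, map_inv, map_inv] at this
lemma rel3 : g₃ * g₂ * g₃⁻¹ * g₂ = 1 := by
  have := mk_rel mem3
  rwa [map_mul, map_mul, map_inv] at this

lemma conj1 : g₂ * g₁ * g₂⁻¹ = g₁⁻¹ := by
  calc g₂ * g₁ * g₂⁻¹ = (g₂ * g₁ * g₂⁻¹ * g₁) * g₁⁻¹ := by group
  _ = 1 * g₁⁻¹ := by rw [rel1]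
  _ = g₁⁻¹ := one_mul _
lemma conj2 : g₃ * g₁ * g₃⁻¹ = g₁ := by
  calc g₃ * g₁ * g₃⁻¹ = (g₃ * g₁ * g₃⁻¹ * g₁⁻¹) * g₁ := by group
  _ = 1 * g₁ := by rw [rel2]
  _ = g₁ := one_mul _
lemma conj3 : g₃ * g₂ * g₃⁻¹ = g₂⁻¹ := by
  calc g₃ * g₂ * g₃⁻¹ = (g₃ * g₂ * g₃⁻¹ * g₂) * g₂⁻¹ := by group
  _ = 1 * g₂⁻¹ := by rw [rel3]
  _ = g₂⁻¹ := one_mul _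

-- single step swaps
lemma s21 (x : ℤ) : g₂ * g₁ ^ x = g₁ ^ (-x) * g₂ := by
  have h : g₂ * g₁ ^ x * g₂⁻¹ = g₁ ^ (-x) := by
    rw [← conj_zpow, conj1, inv_zpow']
  calc g₂ * g₁ ^ x = g₂ * g₁ ^ x * g₂⁻¹ * g₂ := by group
  _ = g₁ ^ (-x) * g₂ := by rw [h]
lemma s21' (x : ℤ) : g₂⁻¹ * g₁ ^ x = g₁ ^ (-x) * g₂⁻¹ := by
  have h := s21 (-x)
  rw [neg_neg] at h
  calc g₂⁻¹ * g₁ ^ x = g₂⁻¹ * (g₁ ^ x * g₂) * g₂⁻¹ := by group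
  _ = g₂⁻¹ * (g₂ * g₁ ^ (-x)) * g₂⁻¹ := by rw [← h]
  _ = g₁ ^ (-x) * g₂⁻¹ := by group
lemma s31 (x : ℤ) : g₃ * g₁ ^ x = g₁ ^ x * g₃ := by
  have h : g₃ * g₁ ^ x * g₃⁻¹ = g₁ ^ x := by rw [← conj_zpow, conj2]
  calc g₃ * g₁ ^ x = g₃ * g₁ ^ x * g₃⁻¹ * g₃ := by group
  _ = g₁ ^ x * g₃ := by rw [h]
lemma s31' (x : ℤ) : g₃⁻¹ * g₁ ^ x = g₁ ^ x * g₃⁻¹ := by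
  have h := s31 x
  calc g₃⁻¹ * g₁ ^ x = g₃⁻¹ * (g₁ ^ x * g₃) * g₃⁻¹ := by group
  _ = g₃⁻¹ * (g₃ * g₁ ^ x) * g₃⁻¹ := by rw [← h]
  _ = g₁ ^ x * g₃⁻¹ := by group
lemma s32 (y : ℤ) : g₃ * g₂ ^ y = g₂ ^ (-y) * g₃ := by
  have h : g₃ * g₂ ^ y * g₃⁻¹ = g₂ ^ (-y) := by
    rw [← conj_zpow, conj3, inv_zpow']
  calc g₃ * g₂ ^ y = g₃ * g₂ ^ y * g₃⁻¹ * g₃ := by group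
  _ = g₂ ^ (-y) * g₃ := by rw [h]
lemma s32' (y : ℤ) : g₃⁻¹ * g₂ ^ y = g₂ ^ (-y) * g₃⁻¹ := by
  have h := s32 (-y)
  rw [neg_neg] at h
  calc g₃⁻¹ * g₂ ^ y = g₃⁻¹ * (g₂ ^ y * g₃) * g₃⁻¹ := by group
  _ = g₃⁻¹ * (g₃ * g₂ ^ (-y)) * g₃⁻¹ := by rw [← h]
  _ = g₂ ^ (-y) * g₃⁻¹ := by group

lemma swap21 (y x : ℤ) : g₂ ^ y * g₁ ^ x = g₁ ^ (sg y * x) * g₂ ^ y := by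
  induction y using Int.induction_on generalizing x with
  | zero => simp
  | succ k ih =>
      calc g₂ ^ ((k : ℤ) + 1) * g₁ ^ x = g₂ ^ (k : ℤ) * (g₂ * g₁ ^ x) := by
            rw [zpow_add_one]; group
      _ = g₂ ^ (k : ℤ) * (g₁ ^ (-x) * g₂) := by rw [s21]
      _ = g₁ ^ (sg (k : ℤ) * (-x)) * g₂ ^ ((k : ℤ) + 1) := by
            rw [← mul_assoc, ih (-x), zpow_add_one]; group
      _ = g₁ ^ (sg ((k : ℤ) + 1) * x) * g₂ ^ ((k : ℤ) + 1) := by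
            rw [show sg (k : ℤ) * (-x) = sg ((k : ℤ) + 1) * x by rw [sg_add, sg_one]; ring]
  | pred k ih =>
      calc g₂ ^ (-(k : ℤ) - 1) * g₁ ^ x = g₂ ^ (-(k : ℤ)) * (g₂⁻¹ * g₁ ^ x) := by
            rw [zpow_sub_one]; group
      _ = g₂ ^ (-(k : ℤ)) * (g₁ ^ (-x) * g₂⁻¹) := by rw [s21']
      _ = g₁ ^ (sg (-(k : ℤ)) * (-x)) * g₂ ^ (-(k : ℤ) - 1) := by
            rw [← mul_assoc, ih (-x), zpow_sub_one]; group
      _ = g₁ ^ (sg (-(k : ℤ) - 1) * x) * g₂ ^ (-(k : ℤ) - 1) := by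
            rw [show sg (-(k : ℤ)) * (-x) = sg (-(k : ℤ) - 1) * x by
              rw [show -(k : ℤ) - 1 = -(k : ℤ) + (-1) by ring, sg_add, sg_neg_one]; ring]

lemma swap31 (z x : ℤ) : g₃ ^ z * g₁ ^ x = g₁ ^ x * g₃ ^ z := by
  induction z using Int.induction_on with
  | zero => simp
  | succ k ih =>
      calc g₃ ^ ((k : ℤ) + 1) * g₁ ^ x = g₃ ^ (k : ℤ) * (g₃ * g₁ ^ x) := by
            rw [zpow_add_one]; group
      _ = g₃ ^ (k : ℤ) * (g₁ ^ x * g₃) := by rw [s31]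
      _ = g₁ ^ x * g₃ ^ ((k : ℤ) + 1) := by rw [← mul_assoc, ih, zpow_add_one]; group
  | pred k ih =>
      calc g₃ ^ (-(k : ℤ) - 1) * g₁ ^ x = g₃ ^ (-(k : ℤ)) * (g₃⁻¹ * g₁ ^ x) := by
            rw [zpow_sub_one]; group
      _ = g₃ ^ (-(k : ℤ)) * (g₁ ^ x * g₃⁻¹) := by rw [s31']
      _ = g₁ ^ x * g₃ ^ (-(k : ℤ) - 1) := by rw [← mul_assoc, ih, zpow_sub_one]; group

lemma swap32 (z y : ℤ) : g₃ ^ z * g₂ ^ y = g₂ ^ (sg z * y) * g₃ ^ z := by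
  induction z using Int.induction_on generalizing y with
  | zero => simp
  | succ k ih =>
      calc g₃ ^ ((k : ℤ) + 1) * g₂ ^ y = g₃ ^ (k : ℤ) * (g₃ * g₂ ^ y) := by
            rw [zpow_add_one]; group
      _ = g₃ ^ (k : ℤ) * (g₂ ^ (-y) * g₃) := by rw [s32]
      _ = g₂ ^ (sg (k : ℤ) * (-y)) * g₃ ^ ((k : ℤ) + 1) := by
            rw [← mul_assoc, ih (-y), zpow_add_one]; group
      _ = g₂ ^ (sg ((k : ℤ) + 1) * y) * g₃ ^ ((k : ℤ) + 1) := by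
            rw [show sg (k : ℤ) * (-y) = sg ((k : ℤ) + 1) * y by rw [sg_add, sg_one]; ring]
  | pred k ih =>
      calc g₃ ^ (-(k : ℤ) - 1) * g₂ ^ y = g₃ ^ (-(k : ℤ)) * (g₃⁻¹ * g₂ ^ y) := by
            rw [zpow_sub_one]; group
      _ = g₃ ^ (-(k : ℤ)) * (g₂ ^ (-y) * g₃⁻¹) := by rw [s32']
      _ = g₂ ^ (sg (-(k : ℤ)) * (-y)) * g₃ ^ (-(k : ℤ) - 1) := by
            rw [← mul_assoc, ih (-y), zpow_sub_one]; group
      _ = g₂ ^ (sg (-(k : ℤ) - 1) * y) * g₃ ^ (-(k : ℤ) - 1) := by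
            rw [show sg (-(k : ℤ)) * (-y) = sg (-(k : ℤ) - 1) * y by
              rw [show -(k : ℤ) - 1 = -(k : ℤ) + (-1) by ring, sg_add, sg_neg_one]; ring]

lemma mulform (x₁ y₁ z₁ x₂ y₂ z₂ : ℤ) :
    (g₁ ^ x₁ * g₂ ^ y₁ * g₃ ^ z₁) * (g₁ ^ x₂ * g₂ ^ y₂ * g₃ ^ z₂) =
      g₁ ^ (x₁ + sg y₁ * x₂) * g₂ ^ (y₁ + sg z₁ * y₂) * g₃ ^ (z₁ + z₂) := by
  calc (g₁ ^ x₁ * g₂ ^ y₁ * g₃ ^ z₁) * (g₁ ^ x₂ * g₂ ^ y₂ * g₃ ^ z₂)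
      = g₁ ^ x₁ * g₂ ^ y₁ * (g₃ ^ z₁ * g₁ ^ x₂) * g₂ ^ y₂ * g₃ ^ z₂ := by group
    _ = g₁ ^ x₁ * g₂ ^ y₁ * (g₁ ^ x₂ * g₃ ^ z₁) * g₂ ^ y₂ * g₃ ^ z₂ := by rw [swap31]
    _ = g₁ ^ x₁ * (g₂ ^ y₁ * g₁ ^ x₂) * (g₃ ^ z₁ * g₂ ^ y₂) * g₃ ^ z₂ := by group
    _ = g₁ ^ x₁ * (g₁ ^ (sg y₁ * x₂) * g₂ ^ y₁) * (g₂ ^ (sg z₁ * y₂) * g₃ ^ z₁) * g₃ ^ z₂ := by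
          rw [swap21, swap32]
    _ = (g₁ ^ x₁ * g₁ ^ (sg y₁ * x₂)) * (g₂ ^ y₁ * g₂ ^ (sg z₁ * y₂)) * (g₃ ^ z₁ * g₃ ^ z₂) := by
          group
    _ = g₁ ^ (x₁ + sg y₁ * x₂) * g₂ ^ (y₁ + sg z₁ * y₂) * g₃ ^ (z₁ + z₂) := by
          rw [← zpow_add, ← zpow_add, ← zpow_add]

def fM : Fin 3 → M
  | 0 => ⟨1,0,0⟩
  | 1 => ⟨0,1,0⟩
  | 2 => ⟨0,0,1⟩

lemma hfM : ∀ r ∈ polyZRelsA0, FreeGroup.lift fM r = 1 := by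
  intro r hr
  simp only [polyZRelsA0, Set.mem_insert_iff, Set.mem_singleton_iff] at hr
  rcases hr with rfl | rfl | rfl <;>
    · simp only [map_mul, map_inv, FreeGroup.lift_apply_of]
      show fM _ * fM _ * (fM _)⁻¹ * _ = 1
      ext <;> simp [fM, M.mul_def, M.inv_def, M.one_def]

def φ : P →* M := PresentedGroup.toGroup hfM

@[simp] lemma φ_g₁ : φ g₁ = ⟨1,0,0⟩ := by
  show φ (PresentedGroup.of 0) = _
  rw [φ, PresentedGroup.toGroup.of]; rfl
@[simp] lemma φ_g₂ : φ g₂ = ⟨0,1,0⟩ := by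
  show φ (PresentedGroup.of 1) = _
  rw [φ, PresentedGroup.toGroup.of]; rfl
@[simp] lemma φ_g₃ : φ g₃ = ⟨0,0,1⟩ := by
  show φ (PresentedGroup.of 2) = _
  rw [φ, PresentedGroup.toGroup.of]; rfl

def σ : M →* P :=
  MonoidHom.mk' (fun v => g₁ ^ v.x * g₂ ^ v.y * g₃ ^ v.z) (by
    intro u v
    show g₁ ^ (u * v).x * g₂ ^ (u * v).y * g₃ ^ (u * v).z = _
    rw [M.mul_x, M.mul_y, M.mul_z, mulform])

lemma σ_apply (v : M) : σ v = g₁ ^ v.x * g₂ ^ v.y * g₃ ^ v.z := rfl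

lemma φσ (v : M) : φ (σ v) = v := by
  rw [σ_apply, map_mul, map_mul, map_zpow, map_zpow, map_zpow, φ_g₁, φ_g₂, φ_g₃,
    M.zpowX, M.zpowY, M.zpowZ]
  ext <;> simp [M.mul_def]

lemma σφ (g : P) : σ (φ g) = g := by
  have h : σ.comp φ = MonoidHom.id P := by
    apply PresentedGroup.ext
    intro i
    fin_cases i
    · show σ (φ g₁) = g₁
      rw [φ_g₁, σ_apply]; simp
    · show σ (φ g₂) = g₂
      rw [φ_g₂, σ_apply]; simp
    · show σ (φ g₃) = g₃
      rw [φ_g₃, σ_apply]; simp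
  calc σ (φ g) = (σ.comp φ) g := rfl
  _ = g := by rw [h]; rfl

def eM : P ≃* M :=
  { toFun := φ, invFun := σ, left_inv := σφ, right_inv := φσ, map_mul' := map_mul φ }

lemma eM_apply (g : P) : eM g = φ g := rfl
lemma eM_symm_apply (v : M) : eM.symm v = σ v := rfl

lemma eval (x y z : ℤ) : eM (g₁ ^ x * g₂ ^ y * g₃ ^ z) = ⟨x, y, z⟩ := by
  have h : (⟨x,y,z⟩ : M) = eM (σ ⟨x,y,z⟩) := (φσ _).symm
  rw [h, σ_apply]

lemma esymm (x y z : ℤ) : eM.symm ⟨x, y, z⟩ = g₁ ^ x * g₂ ^ y * g₃ ^ z := rfl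

end P

-- square/power helper in M
lemma M.zpowS (s t : ℤ) (ht : t = 1 ∨ t = -1) (w : ℤ) :
    (⟨s, t, 0⟩ : M) ^ (2 * w) = ⟨0, 2 * (t * w), 0⟩ := by
  have hsq : (⟨s, t, 0⟩ : M) ^ (2 : ℤ) = ⟨0, 2 * t, 0⟩ := by
    have hsg : sg t = -1 := by rcases ht with rfl | rfl <;> simp
    rw [show (2:ℤ) = 1 + 1 by norm_num, zpow_add, zpow_one]
    ext <;> simp [M.mul_def, hsg] <;> ring
  rw [zpow_mul, hsq, M.zpowY]
  ext <;> simp <;> ring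

-- data for the inverse homomorphism
def f' (a b ε₁ ε₂ ε₃ : ℤ) : Fin 3 → M
  | 0 => ⟨ε₁, 0, 0⟩
  | 1 => ⟨-(ε₁ * a), ε₂, 0⟩
  | 2 => ⟨0, -(2 * (ε₂ * b)), ε₃⟩

@[simp] lemma f'_0 (a b ε₁ ε₂ ε₃ : ℤ) : f' a b ε₁ ε₂ ε₃ 0 = ⟨ε₁, 0, 0⟩ := rfl
@[simp] lemma f'_1 (a b ε₁ ε₂ ε₃ : ℤ) : f' a b ε₁ ε₂ ε₃ 1 = ⟨-(ε₁ * a), ε₂, 0⟩ := rfl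
@[simp] lemma f'_2 (a b ε₁ ε₂ ε₃ : ℤ) : f' a b ε₁ ε₂ ε₃ 2 = ⟨0, -(2 * (ε₂ * b)), ε₃⟩ := rfl

lemma hf' (a b ε₁ ε₂ ε₃ : ℤ) (h2 : ε₂ = 1 ∨ ε₂ = -1) (h3 : ε₃ = 1 ∨ ε₃ = -1) :
    ∀ r ∈ polyZRelsA0, FreeGroup.lift (f' a b ε₁ ε₂ ε₃) r = 1 := by
  intro r hr
  have hsg2 : sg ε₂ = -1 := by rcases h2 with rfl | rfl <;> simp
  have hsg3 : sg ε₃ = -1 := by rcases h3 with rfl | rfl <;> simp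
  simp only [polyZRelsA0, Set.mem_insert_iff, Set.mem_singleton_iff] at hr
  rcases hr with rfl | rfl | rfl <;>
    · simp only [map_mul, map_inv, FreeGroup.lift_apply_of, f'_0, f'_1, f'_2]
      ext <;> simp [M.mul_def, M.inv_def, M.one_def, hsg2, hsg3] <;> ring

lemma Mb2 (x y : ℤ) : (⟨1,0,0⟩ : M) ^ x * (⟨0,1,0⟩ : M) ^ y = ⟨x, y, 0⟩ := by
  rw [M.zpowX, M.zpowY]; ext <;> simp [M.mul_def]
lemma Mb23 (y z : ℤ) : (⟨0,1,0⟩ : M) ^ y * (⟨0,0,1⟩ : M) ^ z = ⟨0, y, z⟩ := by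
  rw [M.zpowY, M.zpowZ]; ext <;> simp [M.mul_def]

lemma Mc2 (u v ε₁ ε₂ : ℤ) (h2 : ε₂ = 1 ∨ ε₂ = -1) (hc : ε₁ * u + v = 0) :
    ((⟨1,0,0⟩ : M) ^ ε₁) ^ u * ((⟨1,0,0⟩ : M) ^ v * (⟨0,1,0⟩ : M) ^ ε₂) ^ ε₂ = ⟨0,1,0⟩ := by
  rw [M.zpowX, M.zpowX, Mb2]
  rcases h2 with rfl | rfl
  · rw [zpow_one]
    ext <;> simp [M.mul_def] <;> linarith
  · rw [show ((-1 : ℤ)) = -(1 : ℤ) by norm_num, zpow_neg, zpow_one]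
    ext <;> simp [M.mul_def, M.inv_def] <;> linarith

lemma Mc3 (s u w ε₂ ε₃ : ℤ) (h2 : ε₂ = 1 ∨ ε₂ = -1) (h3 : ε₃ = 1 ∨ ε₃ = -1)
    (hc : 2 * (ε₂ * u) + w = 0) :
    ((⟨1,0,0⟩ : M) ^ s * (⟨0,1,0⟩ : M) ^ ε₂) ^ (2 * u) *
      ((⟨0,1,0⟩ : M) ^ w * (⟨0,0,1⟩ : M) ^ ε₃) ^ ε₃ = ⟨0,0,1⟩ := by
  rw [Mb2, Mb23, M.zpowS s ε₂ h2 u]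
  rcases h3 with rfl | rfl
  · rw [zpow_one]
    ext <;> simp [M.mul_def] <;> linarith
  · rw [show ((-1 : ℤ)) = -(1 : ℤ) by norm_num, zpow_neg, zpow_one]
    ext <;> simp [M.mul_def, M.inv_def] <;> linarith

lemma eM_g₁ : eM g₁ = ⟨1,0,0⟩ := φ_g₁
lemma eM_g₂ : eM g₂ = ⟨0,1,0⟩ := φ_g₂
lemma eM_g₃ : eM g₃ = ⟨0,0,1⟩ := φ_g₃

end PolyZAux


section
open PolyZAux

/-- In `G₃ = ⟨g₁, g₂, g₃ ∣ g₂g₁ = g₁⁻¹g₂, g₃g₁ = g₁g₃, g₃g₂ = g₂⁻¹g₃⟩`, a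
group homomorphism `ψ : G₃ →* G₃` is an automorphism (i.e. bijective) if and
only if there exist `a, b ∈ ℤ` and `ε₁, ε₂, ε₃ ∈ {1, -1}` such that
`ψ g₁ = g₁^{ε₁}`, `ψ g₂ = g₁^a g₂^{ε₂}`, and `ψ g₃ = g₂^{2b} g₃^{ε₃}`. -/
theorem polyZ_a0_aut_characterization
    (ψ : PresentedGroup polyZRelsA0 →* PresentedGroup polyZRelsA0) :
    letI G₃ := PresentedGroup polyZRelsA0
    letI g₁ : G₃ := PresentedGroup.of 0
    letI g₂ : G₃ := PresentedGroup.of 1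
    letI g₃ : G₃ := PresentedGroup.of 2
    Function.Bijective ψ ↔
      ∃ (a b ε₁ ε₂ ε₃ : ℤ), (ε₁ = 1 ∨ ε₁ = -1) ∧ (ε₂ = 1 ∨ ε₂ = -1) ∧
        (ε₃ = 1 ∨ ε₃ = -1) ∧
        ψ g₁ = g₁ ^ ε₁ ∧ ψ g₂ = g₁ ^ a * g₂ ^ ε₂ ∧
        ψ g₃ = g₂ ^ (2 * b) * g₃ ^ ε₃ := by
  show Function.Bijective ψ ↔
      ∃ (a b ε₁ ε₂ ε₃ : ℤ), (ε₁ = 1 ∨ ε₁ = -1) ∧ (ε₂ = 1 ∨ ε₂ = -1) ∧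
        (ε₃ = 1 ∨ ε₃ = -1) ∧
        ψ PolyZAux.g₁ = PolyZAux.g₁ ^ ε₁ ∧
        ψ PolyZAux.g₂ = PolyZAux.g₁ ^ a * PolyZAux.g₂ ^ ε₂ ∧
        ψ PolyZAux.g₃ = PolyZAux.g₂ ^ (2 * b) * PolyZAux.g₃ ^ ε₃
  constructor
  · intro hbij
    set θ : M →* M := (eM.toMonoidHom.comp ψ).comp eM.symm.toMonoidHom with hθdef
    have hθ : ∀ v : M, θ v = eM (ψ (eM.symm v)) := fun v => rfl
    have hsurj : Function.Surjective θ := by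
      intro v
      obtain ⟨g, hg⟩ := hbij.2 (eM.symm v)
      exact ⟨eM g, by rw [hθ, eM.symm_apply_apply, hg, eM.apply_symm_apply]⟩
    obtain ⟨a, b, ε₁, ε₂, ε₃, hε₁, hε₂, hε₃, hA, hB, hC⟩ := M.forward θ hsurj
    have hs1 : eM.symm ⟨1,0,0⟩ = PolyZAux.g₁ := by rw [esymm]; simp
    have hs2 : eM.symm ⟨0,1,0⟩ = PolyZAux.g₂ := by rw [esymm]; simp
    have hs3 : eM.symm ⟨0,0,1⟩ = PolyZAux.g₃ := by rw [esymm]; simp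
    have e1 : eM (ψ PolyZAux.g₁) = ⟨ε₁,0,0⟩ := by rw [← hs1, ← hθ]; exact hA
    have e2 : eM (ψ PolyZAux.g₂) = ⟨a,ε₂,0⟩ := by rw [← hs2, ← hθ]; exact hB
    have e3 : eM (ψ PolyZAux.g₃) = ⟨0,2*b,ε₃⟩ := by rw [← hs3, ← hθ]; exact hC
    refine ⟨a, b, ε₁, ε₂, ε₃, hε₁, hε₂, hε₃, ?_, ?_, ?_⟩
    · have h := congrArg eM.symm e1
      rw [eM.symm_apply_apply, esymm] at h
      simpa using h
    · have h := congrArg eM.symm e2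
      rw [eM.symm_apply_apply, esymm] at h
      simpa using h
    · have h := congrArg eM.symm e3
      rw [eM.symm_apply_apply, esymm] at h
      simpa using h
  · rintro ⟨a, b, ε₁, ε₂, ε₃, hε₁, hε₂, hε₃, h1, h2, h3⟩
    set ψ' : P →* P :=
      (eM.symm.toMonoidHom).comp (PresentedGroup.toGroup (hf' a b ε₁ ε₂ ε₃ hε₂ hε₃)) with hψ'def
    have hψ'1 : ψ' PolyZAux.g₁ = PolyZAux.g₁ ^ ε₁ := by
      show eM.symm (PresentedGroup.toGroup _ (PresentedGroup.of 0)) = _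
      rw [PresentedGroup.toGroup.of]
      show eM.symm ⟨ε₁, 0, 0⟩ = _
      rw [esymm]; simp
    have hψ'2 : ψ' PolyZAux.g₂ = PolyZAux.g₁ ^ (-(ε₁ * a)) * PolyZAux.g₂ ^ ε₂ := by
      show eM.symm (PresentedGroup.toGroup _ (PresentedGroup.of 1)) = _
      rw [PresentedGroup.toGroup.of]
      show eM.symm ⟨-(ε₁ * a), ε₂, 0⟩ = _
      rw [esymm]; simp
    have hψ'3 : ψ' PolyZAux.g₃ = PolyZAux.g₂ ^ (-(2 * (ε₂ * b))) * PolyZAux.g₃ ^ ε₃ := by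
      show eM.symm (PresentedGroup.toGroup _ (PresentedGroup.of 2)) = _
      rw [PresentedGroup.toGroup.of]
      show eM.symm ⟨0, -(2 * (ε₂ * b)), ε₃⟩ = _
      rw [esymm]; simp
    have hli : ψ'.comp ψ = MonoidHom.id _ := by
      apply PresentedGroup.ext
      intro i
      fin_cases i
      · show ψ' (ψ PolyZAux.g₁) = PolyZAux.g₁
        rw [h1, map_zpow, hψ'1, ← zpow_mul]
        rcases hε₁ with rfl | rfl <;> norm_num
      · show ψ' (ψ PolyZAux.g₂) = PolyZAux.g₂
        rw [h2, map_mul, map_zpow, map_zpow, hψ'1, hψ'2]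
        apply eM.injective
        simp only [map_mul, map_zpow, eM_g₁, eM_g₂]
        exact Mc2 a (-(ε₁ * a)) ε₁ ε₂ hε₂ (by ring)
      · show ψ' (ψ PolyZAux.g₃) = PolyZAux.g₃
        rw [h3, map_mul, map_zpow, map_zpow, hψ'2, hψ'3]
        apply eM.injective
        simp only [map_mul, map_zpow, eM_g₁, eM_g₂, eM_g₃]
        exact Mc3 (-(ε₁ * a)) b (-(2 * (ε₂ * b))) ε₂ ε₃ hε₂ hε₃ (by ring)
    have hri : ψ.comp ψ' = MonoidHom.id _ := by
      apply PresentedGroup.ext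
      intro i
      fin_cases i
      · show ψ (ψ' PolyZAux.g₁) = PolyZAux.g₁
        rw [hψ'1, map_zpow, h1, ← zpow_mul]
        rcases hε₁ with rfl | rfl <;> norm_num
      · show ψ (ψ' PolyZAux.g₂) = PolyZAux.g₂
        rw [hψ'2, map_mul, map_zpow, map_zpow, h1, h2]
        apply eM.injective
        simp only [map_mul, map_zpow, eM_g₁, eM_g₂]
        exact Mc2 (-(ε₁ * a)) a ε₁ ε₂ hε₂
          (by rcases hε₁ with rfl | rfl <;> ring)
      · show ψ (ψ' PolyZAux.g₃) = PolyZAux.g₃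
        rw [hψ'3, map_mul, map_zpow, map_zpow, h2, h3]
        apply eM.injective
        simp only [map_mul, map_zpow, eM_g₁, eM_g₂, eM_g₃]
        rw [show (-(2 * (ε₂ * b))) = 2 * (-(ε₂ * b)) by ring]
        exact Mc3 a (-(ε₂ * b)) (2 * b) ε₂ ε₃ hε₂ hε₃
          (by rcases hε₂ with rfl | rfl <;> ring)
    constructor
    · intro g g' hgg'
      have : ψ'.comp ψ g = ψ'.comp ψ g' := by simp [MonoidHom.comp_apply, hgg']
      rwa [hli, MonoidHom.id_apply, MonoidHom.id_apply] at this
    · intro g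
      exact ⟨ψ' g, by have := congrArg (fun χ : _ →* _ => χ g) hri; simpa using this⟩

end
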